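/- Necessity of the eigenvalue recursion (equation (11) of the paper): Let m ≥ 2. Suppose u : ℝ^{n−1} → ℝ is an eigenfunction of Δ_m with eigenvalue λ_m ∉ {2, n+2, 2n}, its restriction to V_{m−1} is an eigenfunction of Δ_{m−1} with eigenvalue λ_{m−1}, and u(x) ≠ 0 for some x ∈ V_{m−1} \ V_0. Then λ_m² − (n+2)λ_m + λ_{m−1} = 0. -/

import Mathlib

open Finset

noncomputable section

/-- Ambient Euclidean space `ℝ^{n-1}`. -/
abbrev Amb (n : ℕ) := EuclideanSpace ℝ (Fin (n - 1))

/-- The contraction `f_i(x) = (x + x_i)/2`. -/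
def fmap {n : ℕ} (pts : Fin n → Amb n) (i : Fin n) (x : Amb n) : Amb n :=
  (2 : ℝ)⁻¹ • (x + pts i)

/-- Composition of contractions along a list (first entry applied last... actually first). -/
def fList {n : ℕ} (pts : Fin n → Amb n) : List (Fin n) → Amb n → Amb n
  | [] => id
  | i :: t => fmap pts i ∘ fList pts t

/-- The `m`-contraction `f_w = f_{w_0} ∘ ⋯ ∘ f_{w_{m-1}}`. -/
def fWord {n m : ℕ} (pts : Fin n → Amb n) (w : Fin m → Fin n) : Amb n → Amb n :=
  fList pts (List.ofFn w)

/-- The vertex set `V_m = ⋃_w f_w(V_0)`, where `V_0 = {x_0, …, x_{n-1}}`. -/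
def V {n : ℕ} (pts : Fin n → Amb n) (m : ℕ) : Set (Amb n) :=
  ⋃ w : Fin m → Fin n, fWord pts w '' Set.range pts

/-- Adjacency in the graph `Γ_m`. -/
def Adj {n : ℕ} (pts : Fin n → Amb n) (m : ℕ) (x y : Amb n) : Prop :=
  x ≠ y ∧ ∃ w : Fin m → Fin n,
    x ∈ fWord pts w '' Set.range pts ∧ y ∈ fWord pts w '' Set.range pts

/-- The graph Laplacian `Δ_m u (x) = ∑_{y ~ x} (u(x) - u(y))`. -/
def lap {n : ℕ} (pts : Fin n → Amb n) (m : ℕ) (u : Amb n → ℝ) (x : Amb n) : ℝ :=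
  ∑ᶠ y ∈ {y | Adj pts m x y}, (u x - u y)

/-- `u` is an eigenfunction of `Δ_m` with eigenvalue `lam`:
`Δ_m u (x) = lam * u x` for all `x ∈ V_m \ V_0`. -/
def IsEigen {n : ℕ} (pts : Fin n → Amb n) (m : ℕ) (u : Amb n → ℝ) (lam : ℝ) : Prop :=
  ∀ x ∈ V pts m \ V pts 0, lap pts m u x = lam * u x

/-- The point `x_{r,s} = f_a((x_r + x_s)/2)` for a word `a` of length `m-1`. -/
def xpt {n m : ℕ} (pts : Fin n → Amb n) (a : Fin m → Fin n) (r s : Fin n) : Amb n :=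
  fWord pts a ((2 : ℝ)⁻¹ • (pts r + pts s))

/-- The graph energy `E_m(u) = ∑_{x ~ y} (u(x) - u(y))²`, summed over unordered
adjacent pairs (each ordered pair counted once, then halved). -/
def energy {n : ℕ} (pts : Fin n → Amb n) (m : ℕ) (u : Amb n → ℝ) : ℝ :=
  (2 : ℝ)⁻¹ * ∑ᶠ p ∈ {p : Amb n × Amb n | Adj pts m p.1 p.2}, (u p.1 - u p.2) ^ 2

namespace SpecDec

variable {n : ℕ}

/-- Linear part of the coefficient vector of a word. -/
def Mv : List (Fin n) → Fin n → ℕ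
  | [], _ => 0
  | (i :: l), p => 2 ^ l.length * (if p = i then 1 else 0) + Mv l p

/-- Coefficient vector of a word with base vertex. -/
def Nv (l : List (Fin n)) (j p : Fin n) : ℕ := Mv l p + (if p = j then 1 else 0)

lemma sum_Mv (l : List (Fin n)) : (∑ p, Mv l p) + 1 = 2 ^ l.length := by
  induction l with
  | nil => simp [Mv]
  | cons i t ih =>
      simp only [Mv, Finset.sum_add_distrib, List.length_cons]
      rw [← Finset.mul_sum]
      simp only [Finset.sum_ite_eq', Finset.mem_univ, if_true]
      omega

lemma sum_Nv (l : List (Fin n)) (j : Fin n) : ∑ p, Nv l j p = 2 ^ l.length := by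
  simp only [Nv, Finset.sum_add_distrib, Finset.sum_ite_eq', Finset.mem_univ, if_true]
  have := sum_Mv l
  omega

lemma Nv_le (l : List (Fin n)) (j p : Fin n) : Nv l j p ≤ 2 ^ l.length := by
  rw [← sum_Nv l j]
  exact Finset.single_le_sum (fun i _ => Nat.zero_le _) (Finset.mem_univ p)

lemma Nv_eq_single : ∀ (l : List (Fin n)) (j i : Fin n),
    (∀ p, Nv l j p = if p = i then 2 ^ l.length else 0) →
    l = List.replicate l.length i ∧ j = i := by
  intro l
  induction l with
  | nil =>
      intro j i h
      refine ⟨rfl, ?_⟩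
      by_contra hji
      have := h j
      simp [Nv, Mv, hji] at this
  | cons a t ih =>
      intro j i h
      have ha : a = i := by
        by_contra hai
        have := h a
        simp [Nv, Mv, hai] at this
      subst ha
      have h' : ∀ p, Nv t j p = if p = a then 2 ^ t.length else 0 := by
        intro p
        have := h p
        simp only [Nv, Mv, List.length_cons] at this ⊢
        by_cases hp : p = a <;> simp [hp] at this ⊢ <;> omega
      obtain ⟨ht, hj⟩ := ih j a h'
      refine ⟨?_, hj⟩
      rw [List.length_cons, List.replicate_succ, ← ht]

/-- The swap relation describing the only nontrivial coincidence of coefficient vectors. -/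
def Swap (l : List (Fin n)) (j : Fin n) (l' : List (Fin n)) (j' : Fin n) : Prop :=
  ∃ (c : List (Fin n)) (p q : Fin n) (k : ℕ), p ≠ q ∧
    l = c ++ p :: List.replicate k q ∧ j = q ∧
    l' = c ++ q :: List.replicate k p ∧ j' = p

theorem Nv_classify : ∀ (l l' : List (Fin n)) (j j' : Fin n), l.length = l'.length →
    Nv l j = Nv l' j' → ((l = l' ∧ j = j') ∨ Swap l j l' j') := by
  intro l
  induction l with
  | nil =>
      intro l' j j' hlen h
      have hl' : l' = [] := List.length_eq_zero_iff.mp hlen.symm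
      subst hl'
      left
      refine ⟨rfl, ?_⟩
      have := congrFun h j
      simp [Nv, Mv] at this
      by_contra hj
      simp [hj] at this
  | cons i t ih =>
      intro l' j j' hlen h
      match l' with
      | [] => simp at hlen
      | i' :: t' =>
        have hlen' : t.length = t'.length := by simpa using hlen
        by_cases hii : i = i'
        · subst hii
          have h2 : Nv t j = Nv t' j' := by
            funext p
            have := congrFun h p
            simp only [Nv, Mv, hlen'] at this ⊢
            omega
          rcases ih t' j j' hlen' h2 with ⟨rfl, rfl⟩ | ⟨c, p, q, k, hpq, h1, h2, h3, h4⟩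
          · left; exact ⟨rfl, rfl⟩
          · right; exact ⟨i :: c, p, q, k, hpq, by rw [h1]; rfl, h2, by rw [h3]; rfl, h4⟩
        · -- the two all-one-letter case
          have key : ∀ (a b : Fin n) (s s' : List (Fin n)) (jj jj' : Fin n), a ≠ b →
              s.length = s'.length →
              Nv (a :: s) jj = Nv (b :: s') jj' →
              (∀ p, Nv s' jj' p = if p = a then 2 ^ s'.length else 0) := by
            intro a b s s' jj jj' hab hss hNN
            have hcoord : 2 ^ s'.length + Nv s jj a = Nv s' jj' a := by
              have h0 := congrFun hNN a
              simp only [Nv, Mv] at h0 ⊢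
              simp only [if_true] at h0
              rw [if_neg hab, hss] at h0
              omega
            have hle := Nv_le s' jj' a
            have h1 : Nv s' jj' a = 2 ^ s'.length := by omega
            clear hcoord
            -- all other coordinates vanish
            have hsum := sum_Nv s' jj'
            have hrest : ∑ p ∈ Finset.univ.erase a, Nv s' jj' p = 0 := by
              have := Finset.add_sum_erase Finset.univ (Nv s' jj') (Finset.mem_univ a)
              omega
            intro p
            by_cases hp : p = a
            · simp [hp, h1]
            · simp only [if_neg hp]
              have := (Finset.sum_eq_zero_iff).mp hrest p (Finset.mem_erase.mpr ⟨hp, Finset.mem_univ p⟩)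
              exact this
          have hA : ∀ p, Nv t' j' p = if p = i then 2 ^ t'.length else 0 :=
            key i i' t t' j j' hii hlen' h
          have hB : ∀ p, Nv t j p = if p = i' then 2 ^ t.length else 0 :=
            key i' i t' t j' j (Ne.symm hii) hlen'.symm h.symm
          obtain ⟨ht', hj'⟩ := Nv_eq_single t' j' i hA
          obtain ⟨ht, hj⟩ := Nv_eq_single t j i' hB
          right
          refine ⟨[], i, i', t.length, hii, by simpa using ht, hj, ?_, hj'⟩
          simpa [hlen'] using ht' 

variable {n : ℕ}

lemma rev_run {α : Type*} (z : α) : ∀ (k₁ k₂ : ℕ) (a₁ a₂ : α) (r₁ r₂ : List α),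
    a₁ ≠ z → a₂ ≠ z →
    List.replicate k₁ z ++ a₁ :: r₁ = List.replicate k₂ z ++ a₂ :: r₂ →
    k₁ = k₂ ∧ a₁ = a₂ ∧ r₁ = r₂ := by
  intro k₁
  induction k₁ with
  | zero =>
      intro k₂ a₁ a₂ r₁ r₂ h₁ h₂ h
      match k₂ with
      | 0 => simpa using h
      | k + 1 =>
          rw [List.replicate_succ] at h
          simp at h
          exact absurd h.1 h₁
  | succ k ih =>
      intro k₂ a₁ a₂ r₁ r₂ h₁ h₂ h
      match k₂ with
      | 0 =>
          rw [List.replicate_succ] at h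
          simp at h
          exact absurd h.1.symm h₂
      | k' + 1 =>
          rw [List.replicate_succ, List.replicate_succ] at h
          simp only [List.cons_append, List.cons.injEq] at h
          obtain ⟨h4, h5, h6⟩ := ih k' a₁ a₂ r₁ r₂ h₁ h₂ h.2
          exact ⟨by omega, h5, h6⟩

/-- Uniqueness of the trailing-run decomposition (with the same run value). -/
lemma run_unique {c₁ c₂ : List (Fin n)} {a₁ a₂ z : Fin n} {k₁ k₂ : ℕ}
    (h₁ : a₁ ≠ z) (h₂ : a₂ ≠ z)
    (h : c₁ ++ a₁ :: List.replicate k₁ z = c₂ ++ a₂ :: List.replicate k₂ z) :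
    c₁ = c₂ ∧ a₁ = a₂ ∧ k₁ = k₂ := by
  have hr := congrArg List.reverse h
  simp only [List.reverse_append, List.reverse_cons, List.reverse_replicate,
    List.append_assoc] at hr
  have hr' : List.replicate k₁ z ++ a₁ :: c₁.reverse = List.replicate k₂ z ++ a₂ :: c₂.reverse := by
    simpa using hr
  obtain ⟨hk, ha, hc⟩ := rev_run z k₁ k₂ a₁ a₂ _ _ h₁ h₂ hr'
  exact ⟨by simpa using congrArg List.reverse hc, ha, hk⟩

/-- Two lists that agree up to their first difference determine the split point. -/
lemma firstDiff : ∀ (c c' : List (Fin n)) (a b a' b' : Fin n) (r₁ r₂ r₁' r₂' : List (Fin n)),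
    a ≠ b → a' ≠ b' → c ++ a :: r₁ = c' ++ a' :: r₁' → c ++ b :: r₂ = c' ++ b' :: r₂' → c = c' := by
  intro c
  induction c with
  | nil =>
      intro c' a b a' b' r₁ r₂ r₁' r₂' hab hab' h1 h2
      match c' with
      | [] => rfl
      | x :: cc =>
          simp only [List.nil_append, List.cons_append, List.cons.injEq] at h1 h2
          exact absurd (h1.1.trans h2.1.symm) hab
  | cons x c ih =>
      intro c' a b a' b' r₁ r₂ r₁' r₂' hab hab' h1 h2
      match c' with
      | [] =>
          simp only [List.cons_append, List.nil_append, List.cons.injEq] at h1 h2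
          exact absurd (h1.1.symm.trans h2.1) hab'
      | y :: cc =>
          simp only [List.cons_append, List.cons.injEq] at h1 h2
          rw [ih cc a b a' b' r₁ r₂ r₁' r₂' hab hab' h1.2 h2.2, h1.1]

/-- Decomposition of a non-constant list into prefix, pivot and trailing run. -/
lemma trailing_decomp : ∀ (l : List (Fin n)) (j : Fin n),
    l ≠ List.replicate l.length j →
    ∃ (c : List (Fin n)) (p : Fin n) (k : ℕ), p ≠ j ∧ l = c ++ p :: List.replicate k j := by
  intro l
  induction l using List.reverseRecOn with
  | nil => intro j h; simp at h
  | append_singleton l₀ a ih =>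
      intro j h
      by_cases ha : a = j
      · subst ha
        have h₀ : l₀ ≠ List.replicate l₀.length a := by
          intro hc
          apply h
          rw [List.length_append, List.length_singleton, List.replicate_succ', ← hc]
        obtain ⟨c, p, k, hpj, hl⟩ := ih a h₀
        refine ⟨c, p, k + 1, hpj, ?_⟩
        rw [hl, List.replicate_succ']
        simp [List.append_assoc]
      · exact ⟨l₀, a, 0, ha, by simp⟩

variable {n : ℕ} (pts : Fin n → Amb n)

lemma fList_append (l₁ l₂ : List (Fin n)) (x : Amb n) :
    fList pts (l₁ ++ l₂) x = fList pts l₁ (fList pts l₂ x) := by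
  induction l₁ with
  | nil => rfl
  | cons i t ih => simp [fList, List.cons_append, ih]

lemma fmap_fix (i : Fin n) : fmap pts i (pts i) = pts i := by
  rw [fmap, ← two_smul ℝ, smul_smul]
  norm_num

lemma fmap_comm (i j : Fin n) : fmap pts i (pts j) = fmap pts j (pts i) := by
  rw [fmap, fmap, add_comm]

lemma fList_replicate_fix (k : ℕ) (i : Fin n) :
    fList pts (List.replicate k i) (pts i) = pts i := by
  induction k with
  | zero => rfl
  | succ k ih => rw [List.replicate_succ]; show fmap pts i (fList pts (List.replicate k i) (pts i)) = _; rw [ih, fmap_fix]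

lemma mirror (c : List (Fin n)) (p q : Fin n) (k : ℕ) :
    fList pts (c ++ q :: List.replicate k p) (pts p)
      = fList pts (c ++ p :: List.replicate k q) (pts q) := by
  have h1 : ∀ (a b : Fin n), fList pts (c ++ a :: List.replicate k b) (pts b)
      = fList pts c (fmap pts a (pts b)) := by
    intro a b
    have : c ++ a :: List.replicate k b = c ++ [a] ++ List.replicate k b := by simp
    rw [this, fList_append, fList_append, fList_replicate_fix]
    rfl
  rw [h1, h1, fmap_comm]

lemma fList_combo (l : List (Fin n)) (j : Fin n) :
    fList pts l (pts j) = ∑ p, ((Nv l j p : ℝ) / 2 ^ l.length) • pts p := by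
  induction l with
  | nil =>
      simp [fList, Nv, Mv, ite_smul, Finset.sum_ite_eq']
  | cons i t ih =>
      have hstep : fList pts (i :: t) (pts j) = fmap pts i (fList pts t (pts j)) := rfl
      rw [hstep, fmap, ih]
      have hpi : pts i = ∑ p, (if p = i then (1:ℝ) else 0) • pts p := by
        simp [ite_smul, Finset.sum_ite_eq']
      rw [hpi, ← Finset.sum_add_distrib, Finset.smul_sum]
      apply Finset.sum_congr rfl
      intro p _
      rw [← add_smul, smul_smul]
      congr 1
      have hN : Nv (i :: t) j p = 2 ^ t.length * (if p = i then 1 else 0) + Nv t j p := by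
        simp only [Nv, Mv]
        ring
      rw [hN, List.length_cons]
      push_cast
      by_cases hp : p = i
      · simp only [if_pos hp]
        field_simp
        ring
      · simp only [if_neg hp]
        field_simp
        ring

lemma fList_inj_N (hpts : AffineIndependent ℝ pts) {l l' : List (Fin n)} {j j' : Fin n}
    (hlen : l.length = l'.length)
    (h : fList pts l (pts j) = fList pts l' (pts j')) : Nv l j = Nv l' j' := by
  set w1 : Fin n → ℝ := fun p => (Nv l j p : ℝ) / 2 ^ l.length with hw1def
  set w2 : Fin n → ℝ := fun p => (Nv l' j' p : ℝ) / 2 ^ l'.length with hw2def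
  have hcast : ∀ (L : List (Fin n)) (jj : Fin n), (∑ p, (Nv L jj p : ℝ)) = 2 ^ L.length := by
    intro L jj
    rw [← Nat.cast_sum, sum_Nv]
    push_cast
    ring
  have hw1 : ∑ p, w1 p = 1 := by
    simp only [hw1def, ← Finset.sum_div]
    rw [hcast]
    field_simp
  have hw2 : ∑ p, w2 p = 1 := by
    simp only [hw2def, ← Finset.sum_div]
    rw [hcast]
    field_simp
  have heq := (affineIndependent_iff_eq_of_fintype_affineCombination_eq ℝ pts).mp hpts w1 w2 hw1 hw2 ?_
  · funext p
    have h2 := congrFun heq p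
    simp only [hw1def, hw2def, hlen] at h2
    have hne : (2:ℝ) ^ l'.length ≠ 0 := by positivity
    field_simp at h2
    exact_mod_cast h2
  · rw [Finset.affineCombination_eq_linear_combination _ _ _ hw1,
      Finset.affineCombination_eq_linear_combination _ _ _ hw2]
    rw [hw1def, hw2def]
    rw [← fList_combo, ← fList_combo, h]

lemma vert_inj (hpts : AffineIndependent ℝ pts) (W : List (Fin n)) :
    Function.Injective (fun t => fList pts W (pts t)) := by
  intro t t' h
  have h2 := congrFun (fList_inj_N pts hpts rfl h) t
  by_contra hne
  simp [Nv, hne] at h2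

lemma Mv_replicate (k : ℕ) (i p : Fin n) :
    Mv (List.replicate k i) p = (2 ^ k - 1) * (if p = i then 1 else 0) := by
  induction k with
  | zero => simp [Mv]
  | succ k ih =>
      rw [List.replicate_succ]
      show 2 ^ (List.replicate k i).length * (if p = i then 1 else 0) + Mv (List.replicate k i) p = _
      rw [List.length_replicate, ih]
      have h1 : 1 ≤ 2 ^ k := Nat.one_le_two_pow
      have h2 : 2 ^ (k + 1) = 2 * 2 ^ k := by ring
      by_cases hp : p = i <;> simp [hp] <;> omega

lemma Nv_replicate_self (k : ℕ) (i p : Fin n) :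
    Nv (List.replicate k i) i p = if p = i then 2 ^ k else 0 := by
  rw [Nv, Mv_replicate]
  have h1 : 1 ≤ 2 ^ k := Nat.one_le_two_pow
  by_cases hp : p = i <;> simp [hp]
  omega

lemma mem_V_iff {m : ℕ} {y : Amb n} :
    y ∈ V pts m ↔ ∃ (l : List (Fin n)) (j : Fin n), l.length = m ∧ fList pts l (pts j) = y := by
  simp only [V, Set.mem_iUnion, Set.mem_image, Set.mem_range, fWord]
  constructor
  · rintro ⟨w, z, ⟨i, rfl⟩, hz⟩
    exact ⟨List.ofFn w, i, by simp, hz⟩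
  · rintro ⟨l, j, rfl, h⟩
    exact ⟨l.get, pts j, ⟨j, rfl⟩, by rwa [List.ofFn_get]⟩

lemma V0_eq : V pts 0 = Set.range pts := by
  ext y
  rw [mem_V_iff]
  constructor
  · rintro ⟨l, j, hl, h⟩
    rw [List.length_eq_zero_iff.mp hl] at h
    exact ⟨j, h⟩
  · rintro ⟨i, rfl⟩
    exact ⟨[], i, rfl, rfl⟩

lemma reps_pair (hpts : AffineIndependent ℝ pts) (c : List (Fin n)) (p q : Fin n) (k : ℕ)
    (hpq : p ≠ q) {l : List (Fin n)} {j : Fin n}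
    (hlen : l.length = (c ++ p :: List.replicate k q).length)
    (h : fList pts l (pts j) = fList pts (c ++ p :: List.replicate k q) (pts q)) :
    (l = c ++ p :: List.replicate k q ∧ j = q) ∨ (l = c ++ q :: List.replicate k p ∧ j = p) := by
  have hN := fList_inj_N pts hpts hlen h
  rcases Nv_classify l _ j q hlen hN with ⟨h1, h2⟩ | ⟨c', P, Q, k', hPQ, hl, hj, hl2, hq⟩
  · exact Or.inl ⟨h1, h2⟩
  · right
    have hQq : Q ≠ q := fun hh => hPQ (hq.symm.trans hh.symm)
    rw [← hq] at hl2
    obtain ⟨hc, hpQ, hk⟩ := run_unique hpq hQq hl2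
    constructor
    · rw [hl, ← hc, ← hpQ, ← hk, ← hq]
    · rw [hj, ← hpQ]

lemma cross_eq (hpts : AffineIndependent ℝ pts) (c : List (Fin n)) (p q : Fin n) (k : ℕ)
    (hpq : p ≠ q) {t s : Fin n}
    (h : fList pts (c ++ p :: List.replicate k q) (pts t)
        = fList pts (c ++ q :: List.replicate k p) (pts s)) : t = q ∧ s = p := by
  have hN := fList_inj_N pts hpts (by simp) h
  rcases Nv_classify _ _ t s (by simp) hN with ⟨h1, h2⟩ | ⟨c', P, Q, k', hPQ, hl, hj, hl2, hs⟩
  · exfalso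
    have := List.append_cancel_left h1
    simp only [List.cons.injEq] at this
    exact hpq this.1
  · have hcc : c = c' := firstDiff c c' p q P Q _ _ _ _ hpq hPQ hl hl2
    subst hcc
    have h1' := List.append_cancel_left hl
    have h2' := List.append_cancel_left hl2
    simp only [List.cons.injEq] at h1' h2'
    refine ⟨?_, ?_⟩
    · rw [hj]
      exact (h2'.1).symm
    · rw [hs, h1'.1]

lemma mid_not_V0 (hpts : AffineIndependent ℝ pts) (w : List (Fin n)) (s t : Fin n)
    (hst : s ≠ t) : fList pts (w ++ [s]) (pts t) ∉ V pts 0 := by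
  rw [V0_eq]
  rintro ⟨r, hr⟩
  have hrep : fList pts (List.replicate (w ++ [s]).length r) (pts r)
      = fList pts (w ++ [s]) (pts t) := by
    rw [fList_replicate_fix, hr]
  have hN := fList_inj_N pts hpts (by simp) hrep
  have hsingle : ∀ pp, Nv (w ++ [s]) t pp = if pp = r then 2 ^ (w ++ [s]).length else 0 := by
    intro pp
    rw [← congrFun hN pp, Nv_replicate_self]
  obtain ⟨hws, htr⟩ := Nv_eq_single _ _ _ hsingle
  have hs : s ∈ (w ++ [s]) := by simp
  rw [hws] at hs
  have := List.eq_of_mem_replicate hs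
  exact hst (this.trans htr.symm)

lemma adj_lap (hpts : AffineIndependent ℝ pts) {m : ℕ} (W₁ W₂ : List (Fin n))
    (h1 : W₁.length = m) (h2 : W₂.length = m) (t₀ s₀ : Fin n) (z : Amb n)
    (hz1 : fList pts W₁ (pts t₀) = z) (hz2 : fList pts W₂ (pts s₀) = z)
    (hcells : ∀ (l : List (Fin n)) (j : Fin n), l.length = m →
        fList pts l (pts j) = z → l = W₁ ∨ l = W₂)
    (hcross : ∀ t s, fList pts W₁ (pts t) = fList pts W₂ (pts s) → t = t₀ ∧ s = s₀)
    (u : Amb n → ℝ) :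
    lap pts m u z = (∑ t ∈ Finset.univ.erase t₀, (u z - u (fList pts W₁ (pts t))))
      + (∑ s ∈ Finset.univ.erase s₀, (u z - u (fList pts W₂ (pts s)))) := by
  classical
  set F₁ : Finset (Amb n) := (Finset.univ.erase t₀).image (fun t => fList pts W₁ (pts t)) with hF₁
  set F₂ : Finset (Amb n) := (Finset.univ.erase s₀).image (fun s => fList pts W₂ (pts s)) with hF₂
  have hword : ∀ (W : List (Fin n)), W.length = m → ∃ w : Fin m → Fin n, List.ofFn w = W := by
    intro W hW
    subst hW
    exact ⟨W.get, List.ofFn_get W⟩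
  have hset : {y | Adj pts m z y} = ↑(F₁ ∪ F₂) := by
    ext y
    simp only [Set.mem_setOf_eq, Finset.coe_union, Set.mem_union, hF₁, hF₂, Finset.coe_image,
      Set.mem_image, Finset.coe_erase, Set.mem_diff, Finset.coe_univ, Set.mem_univ, true_and,
      Set.mem_singleton_iff]
    constructor
    · rintro ⟨hne, w, hzw, hyw⟩
      rw [fWord] at hzw hyw
      obtain ⟨z', ⟨i, rfl⟩, hz'⟩ := hzw
      obtain ⟨y', ⟨r, rfl⟩, hy'⟩ := hyw
      rcases hcells (List.ofFn w) i (by simp) hz' with hW | hW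
      · left
        refine ⟨r, ?_, by rw [← hW]; exact hy'⟩
        intro hr
        subst hr
        rw [hW] at hy'
        exact hne (hz1.symm.trans hy')
      · right
        refine ⟨r, ?_, by rw [← hW]; exact hy'⟩
        intro hr
        subst hr
        rw [hW] at hy'
        exact hne (hz2.symm.trans hy')
    · intro hy
      have main : ∀ (W : List (Fin n)) (hW : W.length = m) (i₀ : Fin n)
          (hzW : fList pts W (pts i₀) = z) (r : Fin n), r ≠ i₀ → fList pts W (pts r) = y →
          Adj pts m z y := by
        intro W hW i₀ hzW r hr hyW
        refine ⟨?_, ?_⟩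
        · intro hzy
          rw [← hzy, ← hzW] at hyW
          exact hr (vert_inj pts hpts W hyW)
        · obtain ⟨w, hw⟩ := hword W hW
          refine ⟨w, ?_, ?_⟩
          · exact ⟨pts i₀, ⟨i₀, rfl⟩, by rw [fWord, hw]; exact hzW⟩
          · exact ⟨pts r, ⟨r, rfl⟩, by rw [fWord, hw]; exact hyW⟩
      rcases hy with ⟨r, hr, hyW⟩ | ⟨r, hr, hyW⟩
      · exact main W₁ h1 t₀ hz1 r hr hyW
      · exact main W₂ h2 s₀ hz2 r hr hyW
  have hdisj : Disjoint F₁ F₂ := by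
    rw [Finset.disjoint_left]
    rintro y hy1 hy2
    rw [hF₁, Finset.mem_image] at hy1
    rw [hF₂, Finset.mem_image] at hy2
    obtain ⟨t, ht, hty⟩ := hy1
    obtain ⟨s, hs, hsy⟩ := hy2
    obtain ⟨het, -⟩ := hcross t s (hty.trans hsy.symm)
    exact Finset.ne_of_mem_erase ht het
  rw [lap, hset, finsum_mem_coe_finset, Finset.sum_union hdisj,
    Finset.sum_image (fun a _ b _ hab => vert_inj pts hpts W₁ hab),
    Finset.sum_image (fun a _ b _ hab => vert_inj pts hpts W₂ hab)]

lemma erase_sum (hn : 1 ≤ n) (x0 : ℝ) (f : Fin n → ℝ) (t₀ : Fin n) :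
    ∑ r ∈ Finset.univ.erase t₀, (x0 - f r) = ((n : ℝ) - 1) * x0 - ((∑ r, f r) - f t₀) := by
  rw [Finset.sum_sub_distrib, Finset.sum_const, Finset.sum_erase_eq_sub (Finset.mem_univ t₀),
    Finset.card_erase_of_mem (Finset.mem_univ t₀), Finset.card_univ, Fintype.card_fin,
    nsmul_eq_mul, Nat.cast_sub hn, Nat.cast_one]

lemma mid_symm (w : List (Fin n)) (s t : Fin n) :
    fList pts (w ++ [s]) (pts t) = fList pts (w ++ [t]) (pts s) := by
  simpa using mirror pts w t s 0

lemma mid_diag (w : List (Fin n)) (s : Fin n) :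
    fList pts (w ++ [s]) (pts s) = fList pts w (pts s) := by
  rw [fList_append]
  show fList pts w (fmap pts s (pts s)) = _
  rw [fmap_fix]

lemma hcard_erase (hn : 1 ≤ n) (s : Fin n) :
    (((Finset.univ : Finset (Fin n)).erase s).card : ℝ) = (n : ℝ) - 1 := by
  rw [Finset.card_erase_of_mem (Finset.mem_univ s), Finset.card_univ, Fintype.card_fin,
    Nat.cast_sub hn, Nat.cast_one]

lemma key_identity (hn : 1 ≤ n) (hpts : AffineIndependent ℝ pts) {m : ℕ}
    (u : Amb n → ℝ) (lam : ℝ) (hu : IsEigen pts m u lam)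
    (w : List (Fin n)) (hw : w.length + 1 = m) (s t : Fin n) (hst : s ≠ t) :
    2*(n:ℝ) * u (fList pts (w ++ [s]) (pts t))
      - (∑ r, u (fList pts (w ++ [s]) (pts r)))
      - (∑ r, u (fList pts (w ++ [t]) (pts r)))
      = lam * u (fList pts (w ++ [s]) (pts t)) := by
  have hlen1 : (w ++ [s]).length = m := by simpa using hw
  have hlen2 : (w ++ [t]).length = m := by simpa using hw
  have hz2 : fList pts (w ++ [t]) (pts s) = fList pts (w ++ [s]) (pts t) :=
    (mid_symm pts w s t).symm
  have hcells : ∀ (l : List (Fin n)) (j : Fin n), l.length = m →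
      fList pts l (pts j) = fList pts (w ++ [s]) (pts t) → l = w ++ [s] ∨ l = w ++ [t] := by
    intro l j hl hfl
    have h0 := reps_pair pts hpts w s t 0 hst (by simpa using hl.trans hlen1.symm) hfl
    rcases h0 with ⟨h, -⟩ | ⟨h, -⟩
    · exact Or.inl h
    · exact Or.inr h
  have hym : fList pts (w ++ [s]) (pts t) ∈ V pts m \ V pts 0 :=
    ⟨(mem_V_iff pts).mpr ⟨w ++ [s], t, hlen1, rfl⟩, mid_not_V0 pts hpts w s t hst⟩
  have heig := hu _ hym
  rw [adj_lap pts hpts (w ++ [s]) (w ++ [t]) hlen1 hlen2 t s _ rfl hz2 hcells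
      (fun t' s' h => cross_eq pts hpts w s t 0 hst h) u,
    erase_sum hn, erase_sum hn] at heig
  have huv : u (fList pts (w ++ [t]) (pts s)) = u (fList pts (w ++ [s]) (pts t)) :=
    congrArg u hz2
  linear_combination heig - huv

lemma star_abstract (hn : 1 ≤ n) (md : Fin n → Fin n → ℝ) (lam : ℝ)
    (key : ∀ s t, s ≠ t →
      2*(n:ℝ)*md s t - (∑ r, md s r) - (∑ r, md t r) = lam * md s t) (s : Fin n) :
    ((n:ℝ)+2-lam) * (∑ r, md s r)
      = (2*(n:ℝ)-lam) * md s s + ∑ a, ∑ r, md a r := by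
  have e0 : ∀ f : Fin n → ℝ, ∑ t ∈ Finset.univ.erase s, f t = (∑ t, f t) - f s :=
    fun f => Finset.sum_erase_eq_sub (Finset.mem_univ s)
  have EQ : ∑ t ∈ Finset.univ.erase s,
        (2*(n:ℝ)*md s t - (∑ r, md s r) - (∑ r, md t r))
      = ∑ t ∈ Finset.univ.erase s, (lam * md s t) :=
    Finset.sum_congr rfl (fun t ht => key s t ((Finset.ne_of_mem_erase ht).symm))
  have hA : ∑ t ∈ Finset.univ.erase s, md s t = (∑ t, md s t) - md s s := e0 _
  have hB : ∑ t ∈ Finset.univ.erase s, (∑ r, md t r)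
      = (∑ t, ∑ r, md t r) - (∑ r, md s r) := e0 _
  have hC : ∑ t ∈ Finset.univ.erase s,
        (2*(n:ℝ)*md s t - (∑ r, md s r) - (∑ r, md t r))
      = 2*(n:ℝ)*(∑ t ∈ Finset.univ.erase s, md s t)
        - ((n:ℝ)-1)*(∑ r, md s r)
        - ∑ t ∈ Finset.univ.erase s, (∑ r, md t r) := by
    rw [Finset.sum_sub_distrib, Finset.sum_sub_distrib, ← Finset.mul_sum, Finset.sum_const,
      nsmul_eq_mul, hcard_erase hn]
  have hD : ∑ t ∈ Finset.univ.erase s, (lam * md s t)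
      = lam * ((∑ t, md s t) - md s s) := by
    rw [← Finset.mul_sum, hA]
  linear_combination EQ - hC + hD - 2*(n:ℝ)*hA + hB

lemma GT_abstract (hn : 1 ≤ n) (md : Fin n → Fin n → ℝ) (lam : ℝ)
    (key : ∀ s t, s ≠ t →
      2*(n:ℝ)*md s t - (∑ r, md s r) - (∑ r, md t r) = lam * md s t) :
    (2-lam) * (∑ a, ∑ r, md a r) = (2*(n:ℝ)-lam) * (∑ a, md a a) := by
  have EQ2 : ∑ a, (((n:ℝ)+2-lam) * (∑ r, md a r))
      = ∑ a, ((2*(n:ℝ)-lam) * md a a + ∑ a', ∑ r, md a' r) :=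
    Finset.sum_congr rfl (fun a _ => star_abstract hn md lam key a)
  have l1 : ∑ a, (((n:ℝ)+2-lam) * (∑ r, md a r))
      = ((n:ℝ)+2-lam) * (∑ a, ∑ r, md a r) := by rw [← Finset.mul_sum]
  have l2 : ∑ a, ((2*(n:ℝ)-lam) * md a a + ∑ a', ∑ r, md a' r)
      = (2*(n:ℝ)-lam) * (∑ a, md a a) + (n:ℝ) * (∑ a', ∑ r, md a' r) := by
    rw [Finset.sum_add_distrib, ← Finset.mul_sum, Finset.sum_const, Finset.card_univ,
      Fintype.card_fin, nsmul_eq_mul]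
  linear_combination EQ2 - l1 + l2

end SpecDec


/-- Necessity of the eigenvalue recursion (equation (11)). -/
theorem eigenvalue_recursion_necessary
    (n : ℕ) (hn : 2 ≤ n) (pts : Fin n → Amb n) (hpts : AffineIndependent ℝ pts)
    (m : ℕ) (hm : 2 ≤ m) (lamm lamm1 : ℝ)
    (h2 : lamm ≠ 2) (hn2 : lamm ≠ (n : ℝ) + 2) (h2n : lamm ≠ 2 * n)
    (u : Amb n → ℝ)
    (hu : IsEigen pts m u lamm)
    (hres : IsEigen pts (m - 1) u lamm1)
    (hnz : ∃ x ∈ V pts (m - 1) \ V pts 0, u x ≠ 0) :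
    lamm ^ 2 - ((n : ℝ) + 2) * lamm + lamm1 = 0 := by
  classical
  have hn1 : 1 ≤ n := by omega
  obtain ⟨x, hx, hux⟩ := hnz
  obtain ⟨hxV, hxV0⟩ := hx
  obtain ⟨l, j, hlen, hfl⟩ := (SpecDec.mem_V_iff pts).mp hxV
  have hnc : l ≠ List.replicate l.length j := by
    intro hc
    apply hxV0
    rw [SpecDec.V0_eq]
    exact ⟨j, by rw [← hfl, hc, SpecDec.fList_replicate_fix]⟩
  obtain ⟨c, p, k, hpj, hldec⟩ := SpecDec.trailing_decomp l j hnc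
  rw [hldec] at hfl hlen
  have hax : fList pts (c ++ p :: List.replicate k j) (pts j) = x := hfl
  have hbx : fList pts (c ++ j :: List.replicate k p) (pts p) = x := by
    rw [SpecDec.mirror]; exact hax
  have hbl : (c ++ j :: List.replicate k p).length = m - 1 := by simpa using hlen
  have hAa : c ++ p :: List.replicate (k+1) j = (c ++ p :: List.replicate k j) ++ [j] := by
    rw [List.replicate_succ']; simp
  have hBb : c ++ j :: List.replicate (k+1) p = (c ++ j :: List.replicate k p) ++ [p] := by
    rw [List.replicate_succ']; simp
  have hAl : ((c ++ p :: List.replicate k j) ++ [j]).length = m := by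
    rw [List.length_append, hlen, List.length_singleton]; omega
  have hBl : ((c ++ j :: List.replicate k p) ++ [p]).length = m := by
    rw [List.length_append, hbl, List.length_singleton]; omega
  have hAx : fList pts ((c ++ p :: List.replicate k j) ++ [j]) (pts j) = x :=
    (SpecDec.mid_diag pts _ j).trans hax
  have hBx : fList pts ((c ++ j :: List.replicate k p) ++ [p]) (pts p) = x :=
    (SpecDec.mid_diag pts _ p).trans hbx
  -- level-m eigen equation at x
  have cells2 : ∀ (l' : List (Fin n)) (j' : Fin n), l'.length = m →
      fList pts l' (pts j') = x →
      l' = (c ++ p :: List.replicate k j) ++ [j] ∨ l' = (c ++ j :: List.replicate k p) ++ [p] := by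
    intro l' j' hl' hfl'
    have hlen' : l'.length = (c ++ p :: List.replicate (k+1) j).length := by
      rw [hAa]; exact hl'.trans hAl.symm
    have hfl'' : fList pts l' (pts j') = fList pts (c ++ p :: List.replicate (k+1) j) (pts j) := by
      rw [hAa, hAx]; exact hfl'
    rcases SpecDec.reps_pair pts hpts c p j (k+1) hpj hlen' hfl'' with ⟨h, -⟩ | ⟨h, -⟩
    · exact Or.inl (by rw [h, hAa])
    · exact Or.inr (by rw [h, hBb])
  have cross2 : ∀ t s, fList pts ((c ++ p :: List.replicate k j) ++ [j]) (pts t)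
      = fList pts ((c ++ j :: List.replicate k p) ++ [p]) (pts s) → t = j ∧ s = p := by
    intro t s h
    exact SpecDec.cross_eq pts hpts c p j (k+1) hpj (by rw [hAa, hBb]; exact h)
  have hxm : x ∈ V pts m \ V pts 0 :=
    ⟨(SpecDec.mem_V_iff pts).mpr ⟨_, j, hAl, hAx⟩, hxV0⟩
  have heig2 := hu x hxm
  rw [SpecDec.adj_lap pts hpts _ _ hAl hBl j p x hAx hBx cells2 cross2 u,
    SpecDec.erase_sum hn1, SpecDec.erase_sum hn1] at heig2
  -- level-(m-1) eigen equation at x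
  have cells3 : ∀ (l' : List (Fin n)) (j' : Fin n), l'.length = m - 1 →
      fList pts l' (pts j') = x →
      l' = c ++ p :: List.replicate k j ∨ l' = c ++ j :: List.replicate k p := by
    intro l' j' hl' hfl'
    rcases SpecDec.reps_pair pts hpts c p j k hpj (hl'.trans hlen.symm)
      (hfl'.trans hax.symm) with ⟨h, -⟩ | ⟨h, -⟩
    · exact Or.inl h
    · exact Or.inr h
  have cross3 : ∀ t s, fList pts (c ++ p :: List.replicate k j) (pts t)
      = fList pts (c ++ j :: List.replicate k p) (pts s) → t = j ∧ s = p :=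
    fun t s h => SpecDec.cross_eq pts hpts c p j k hpj h
  have heig3 := hres x ⟨hxV, hxV0⟩
  rw [SpecDec.adj_lap pts hpts _ _ hlen hbl j p x hax hbx cells3 cross3 u,
    SpecDec.erase_sum hn1, SpecDec.erase_sum hn1] at heig3
  -- cell identities (star and G/T relations) for both (m-1)-cells
  have hwA : (c ++ p :: List.replicate k j).length + 1 = m := by omega
  have hwB : (c ++ j :: List.replicate k p).length + 1 = m := by omega
  have keyA := fun s t hst => SpecDec.key_identity pts hn1 hpts u lamm hu
    (c ++ p :: List.replicate k j) hwA s t hst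
  have keyB := fun s t hst => SpecDec.key_identity pts hn1 hpts u lamm hu
    (c ++ j :: List.replicate k p) hwB s t hst
  have starA : ((n:ℝ)+2-lamm) * (∑ r, u (fList pts ((c ++ p :: List.replicate k j) ++ [j]) (pts r)))
      = (2*(n:ℝ)-lamm) * u (fList pts ((c ++ p :: List.replicate k j) ++ [j]) (pts j))
        + ∑ a', ∑ r, u (fList pts ((c ++ p :: List.replicate k j) ++ [a']) (pts r)) :=
    SpecDec.star_abstract hn1 _ lamm keyA j
  have starB : ((n:ℝ)+2-lamm) * (∑ r, u (fList pts ((c ++ j :: List.replicate k p) ++ [p]) (pts r)))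
      = (2*(n:ℝ)-lamm) * u (fList pts ((c ++ j :: List.replicate k p) ++ [p]) (pts p))
        + ∑ a', ∑ r, u (fList pts ((c ++ j :: List.replicate k p) ++ [a']) (pts r)) :=
    SpecDec.star_abstract hn1 _ lamm keyB p
  have GTa : (2-lamm) * (∑ a', ∑ r, u (fList pts ((c ++ p :: List.replicate k j) ++ [a']) (pts r)))
      = (2*(n:ℝ)-lamm) * (∑ a', u (fList pts ((c ++ p :: List.replicate k j) ++ [a']) (pts a'))) :=
    SpecDec.GT_abstract hn1 _ lamm keyA
  have GTb : (2-lamm) * (∑ a', ∑ r, u (fList pts ((c ++ j :: List.replicate k p) ++ [a']) (pts r)))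
      = (2*(n:ℝ)-lamm) * (∑ a', u (fList pts ((c ++ j :: List.replicate k p) ++ [a']) (pts a'))) :=
    SpecDec.GT_abstract hn1 _ lamm keyB
  have TA : ∑ a', u (fList pts ((c ++ p :: List.replicate k j) ++ [a']) (pts a'))
      = ∑ a', u (fList pts (c ++ p :: List.replicate k j) (pts a')) :=
    Finset.sum_congr rfl (fun r _ => congrArg u (SpecDec.mid_diag pts _ r))
  have TB : ∑ a', u (fList pts ((c ++ j :: List.replicate k p) ++ [a']) (pts a'))
      = ∑ a', u (fList pts (c ++ j :: List.replicate k p) (pts a')) :=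
    Finset.sum_congr rfl (fun r _ => congrArg u (SpecDec.mid_diag pts _ r))
  have DA : u (fList pts ((c ++ p :: List.replicate k j) ++ [j]) (pts j)) = u x := congrArg u hAx
  have DB : u (fList pts ((c ++ j :: List.replicate k p) ++ [p]) (pts p)) = u x := congrArg u hBx
  have UA : u (fList pts (c ++ p :: List.replicate k j) (pts j)) = u x := congrArg u hax
  have UB : u (fList pts (c ++ j :: List.replicate k p) (pts p)) = u x := congrArg u hbx
  have hkey : (2*(n:ℝ) - lamm) * (((2 - lamm)*((n:ℝ) - lamm) - (2*(n:ℝ) - lamm1)) * u x) = 0 := by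
    linear_combination (2-lamm)*starA + (2-lamm)*starB + GTa + GTb
      + (2*(n:ℝ)-lamm)*TA + (2*(n:ℝ)-lamm)*TB - (2*(n:ℝ)-lamm)*heig3
      + (2*(n:ℝ)-lamm)*UA + (2*(n:ℝ)-lamm)*UB + (2-lamm)*((n:ℝ)+2-lamm)*heig2
      + (2-lamm)*((n:ℝ)-2)*DA + (2-lamm)*((n:ℝ)-2)*DB
  have h2n' : (2*(n:ℝ) - lamm) ≠ 0 := sub_ne_zero_of_ne (Ne.symm h2n)
  have hq : (2 - lamm)*((n:ℝ) - lamm) - (2*(n:ℝ) - lamm1) = 0 := by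
    rcases mul_eq_zero.mp hkey with h | h
    · exact absurd h h2n'
    · rcases mul_eq_zero.mp h with h' | h'
      · exact h'
      · exact absurd h' hux
  linear_combination hq
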